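/- Let b ∈ (0,1], λ > 0, M > 0 with b·λ·M > 1, let Q < 0 be the unique negative real solution of b·λ·e^{Q·M} = b·λ + Q, set a = 1 − b and k = −Q/(M·(b·λ + Q)). Then ∫₀^M e^{λ·μ}·(1/M)·(1 − e^{Q·μ}) dμ = k·e^{Q·M}·(b + a·e^{λ·M})/(λ + Q). -/

import Mathlib

open MeasureTheory intervalIntegral

lemma int_exp_mul (c M : ℝ) (hc : c ≠ 0) :
    ∫ x in (0:ℝ)..M, Real.exp (c * x) = (Real.exp (c * M) - 1) / c := by
  rw [intervalIntegral.integral_comp_mul_left (fun x => Real.exp x) hc]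
  simp [integral_exp, div_eq_inv_mul]

/-- Consistency condition for the lower branch of the stationary density:
`∫₀^M e^{λμ}·(1/M)(1 − e^{Qμ}) dμ = k e^{QM}(b + a e^{λM})/(λ+Q)`
where `a = 1 − b` and `k = −Q/(M(bλ+Q))`. -/
theorem lower_branch_consistency
    (b lam M Q a k : ℝ) (hb0 : 0 < b) (hb1 : b ≤ 1) (hlam : 0 < lam) (hM : 0 < M)
    (hpsi : 1 < b * lam * M) (hQ : Q < 0)
    (hroot : b * lam * Real.exp (Q * M) = b * lam + Q)
    (ha : a = 1 - b) (hk : k = -Q / (M * (b * lam + Q))) :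
    ∫ μ in (0:ℝ)..M, Real.exp (lam * μ) * ((1 / M) * (1 - Real.exp (Q * μ)))
      = k * Real.exp (Q * M) * (b + a * Real.exp (lam * M)) / (lam + Q) := by
  have hE2pos := Real.exp_pos (Q * M)
  have hbQ : 0 < b * lam + Q := by nlinarith
  have hlQ : lam + Q ≠ 0 := by
    intro h
    have hQl : Q = -lam := by linarith
    rw [hQl] at hroot
    have := Real.exp_pos (-lam * M)
    nlinarith
  have hE2 : Real.exp (Q * M) = (b * lam + Q) / (b * lam) := by
    field_simp
    linarith [hroot]
  have hint : (fun μ : ℝ => Real.exp (lam * μ) * ((1 / M) * (1 - Real.exp (Q * μ))))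
      = fun μ : ℝ => (1 / M) * Real.exp (lam * μ) - (1 / M) * Real.exp ((lam + Q) * μ) := by
    funext μ
    rw [add_mul, Real.exp_add]
    ring
  rw [hint]
  rw [intervalIntegral.integral_sub
    ((by fun_prop : Continuous fun μ : ℝ => (1 / M) * Real.exp (lam * μ)).intervalIntegrable 0 M)
    ((by fun_prop : Continuous fun μ : ℝ => (1 / M) * Real.exp ((lam + Q) * μ)).intervalIntegrable 0 M)]
  rw [intervalIntegral.integral_const_mul, intervalIntegral.integral_const_mul,
    int_exp_mul lam M hlam.ne', int_exp_mul (lam + Q) M hlQ,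
    add_mul, Real.exp_add, hE2, hk, ha]
  have hblam : b * lam ≠ 0 := by positivity
  have hbQ' : lam * b + Q ≠ 0 := by rw [mul_comm]; exact hbQ.ne'
  field_simp
  ring
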